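/- The Shapley value is efficient: for any game G : 𝒮 → ℝ on a finite set I with G(∅) = 0, the sum over i ∈ I of Sh_i(G) = ∑_{S ⊆ I \ {i}} (|S|!(|I|−|S|−1)!/|I|!) · (G(S ∪ {i}) − G(S)) equals G(I). -/

import Mathlib

open Finset

theorem stmt6 {n : ℕ} (hn : 0 < n) (G : Finset (Fin n) → ℝ) (hzero : G ∅ = 0) :
    (∑ i : Fin n, ∑ S ∈ (Finset.univ.erase i).powerset,
      ((Nat.factorial S.card * Nat.factorial (n - S.card - 1) : ℝ) / (Nat.factorial n : ℝ)) *
        (G (insert i S) - G S))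
    = G Finset.univ := by
  classical
  set w : ℕ → ℝ := fun k =>
    (Nat.factorial k * Nat.factorial (n - k - 1) : ℝ) / (Nat.factorial n : ℝ) with hw
  have hfn : (0 : ℝ) < Nat.factorial n := by positivity
  have hfn' : (Nat.factorial n : ℝ) ≠ 0 := ne_of_gt hfn
  have huniv_card : (Finset.univ : Finset (Fin n)).card = n := by simp
  have hune : (Finset.univ : Finset (Fin n)) ≠ ∅ := by
    intro h
    rw [h] at huniv_card
    simp at huniv_card
    omega
  -- Split the sum into two parts
  have hsplit : (∑ i : Fin n, ∑ S ∈ (Finset.univ.erase i).powerset,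
      ((Nat.factorial S.card * Nat.factorial (n - S.card - 1) : ℝ) / (Nat.factorial n : ℝ)) *
        (G (insert i S) - G S))
      = (∑ i : Fin n, ∑ S ∈ (Finset.univ.erase i).powerset, w S.card * G (insert i S))
      - (∑ i : Fin n, ∑ S ∈ (Finset.univ.erase i).powerset, w S.card * G S) := by
    rw [← Finset.sum_sub_distrib]
    refine Finset.sum_congr rfl fun i _ => ?_
    rw [← Finset.sum_sub_distrib]
    refine Finset.sum_congr rfl fun S _ => ?_
    ring
  rw [hsplit]
  -- Part A : reindex pairs (i, S) ↦ (insert i S, i)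
  have hA : (∑ i : Fin n, ∑ S ∈ (Finset.univ.erase i).powerset, w S.card * G (insert i S))
      = ∑ T ∈ (Finset.univ : Finset (Fin n)).powerset, (T.card : ℝ) * w (T.card - 1) * G T := by
    rw [Finset.sum_sigma']
    have step : ∀ T ∈ (Finset.univ : Finset (Fin n)).powerset,
        (T.card : ℝ) * w (T.card - 1) * G T = ∑ _i ∈ T, w (T.card - 1) * G T := by
      intro T _
      rw [Finset.sum_const, nsmul_eq_mul]
      ring
    rw [Finset.sum_congr rfl step, Finset.sum_sigma']
    refine Finset.sum_nbij'
      (fun p => (⟨insert p.1 p.2, p.1⟩ : (_ : Finset (Fin n)) × Fin n))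
      (fun q => (⟨q.2, q.1.erase q.2⟩ : (_ : Fin n) × Finset (Fin n)))
      ?_ ?_ ?_ ?_ ?_
    · rintro ⟨i, S⟩ hp
      simp only [Finset.mem_sigma, Finset.mem_powerset] at hp ⊢
      exact ⟨Finset.subset_univ _, Finset.mem_insert_self _ _⟩
    · rintro ⟨T, i⟩ hq
      simp only [Finset.mem_sigma, Finset.mem_powerset, Finset.mem_univ, true_and] at hq ⊢
      intro x hx
      simp only [Finset.mem_erase] at hx ⊢
      exact ⟨hx.1, Finset.mem_univ x⟩
    · rintro ⟨i, S⟩ hp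
      simp only [Finset.mem_sigma, Finset.mem_powerset, Finset.mem_univ, true_and] at hp
      have hiS : i ∉ S := fun h => (Finset.mem_erase.mp (hp h)).1 rfl
      simp [Finset.erase_insert hiS]
    · rintro ⟨T, i⟩ hq
      simp only [Finset.mem_sigma, Finset.mem_powerset] at hq
      simp [Finset.insert_erase hq.2]
    · rintro ⟨i, S⟩ hp
      simp only [Finset.mem_sigma, Finset.mem_powerset, Finset.mem_univ, true_and] at hp
      have hiS : i ∉ S := fun h => (Finset.mem_erase.mp (hp h)).1 rfl
      simp [Finset.card_insert_of_notMem hiS]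
  -- Part B : exchange order of summation
  have hB : (∑ i : Fin n, ∑ S ∈ (Finset.univ.erase i).powerset, w S.card * G S)
      = ∑ S ∈ (Finset.univ : Finset (Fin n)).powerset,
          ((n : ℝ) - S.card) * w S.card * G S := by
    rw [Finset.sum_comm' (t' := (Finset.univ : Finset (Fin n)).powerset)
      (s' := fun S => Finset.univ \ S)]
    · refine Finset.sum_congr rfl fun S hS => ?_
      rw [Finset.sum_const, nsmul_eq_mul]
      have hc : (Finset.univ \ S).card = n - S.card := by
        rw [Finset.card_sdiff_of_subset (Finset.subset_univ S)]
        simp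
      have hcard : S.card ≤ n := by
        simpa using Finset.card_le_card (Finset.subset_univ S)
      rw [hc, Nat.cast_sub hcard]
      ring
    · intro i S
      simp only [Finset.mem_univ, true_and, Finset.mem_powerset, Finset.mem_sdiff, and_true]
      constructor
      · intro h
        exact ⟨fun hm => (Finset.mem_erase.mp (h hm)).1 rfl, Finset.subset_univ S⟩
      · rintro ⟨hiS, -⟩ x hx
        exact Finset.mem_erase.mpr ⟨fun he => hiS (he ▸ hx), Finset.mem_univ x⟩
  rw [hA, hB, ← Finset.sum_sub_distrib]
  have hcoef : ∀ T ∈ (Finset.univ : Finset (Fin n)).powerset,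
      (T.card : ℝ) * w (T.card - 1) * G T - ((n : ℝ) - T.card) * w T.card * G T
        = (if T = Finset.univ then G T else 0)
        + (if T = (∅ : Finset (Fin n)) then -G T else 0) := by
    intro T hT
    have hcard : T.card ≤ n := by
      simpa using Finset.card_le_card (Finset.subset_univ T)
    by_cases h0 : T = ∅
    · subst h0
      rw [if_neg (by intro h; exact hune h.symm), if_pos rfl, hzero]
      simp
    by_cases h1 : T = Finset.univ
    · subst h1
      rw [if_pos rfl, if_neg hune, huniv_card, hw]
      simp only []
      have e0 : n - (n - 1) - 1 = 0 := by omega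
      have e2 : (n : ℝ) * (Nat.factorial (n - 1) : ℝ) = Nat.factorial n := by
        rw [← Nat.cast_mul, Nat.mul_factorial_pred hn.ne']
      rw [Nat.sub_self, e0]
      push_cast [Nat.factorial_zero]
      rw [sub_self, zero_mul, zero_mul, sub_zero]
      field_simp
      linear_combination G Finset.univ * e2
    · -- 1 ≤ card ≤ n - 1, coefficient vanishes
      have hk1 : 1 ≤ T.card := Finset.card_pos.mpr (Finset.nonempty_iff_ne_empty.mpr h0)
      have hkn : T.card < n := by
        rcases lt_or_eq_of_le hcard with h | h
        · exact h
        · exact absurd (Finset.eq_univ_of_card T (by rw [h, ← huniv_card]; simp)) h1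
      rw [if_neg h1, if_neg h0, hw]
      simp only []
      have e1 : n - (T.card - 1) - 1 = n - T.card := by omega
      have e2 : (T.card : ℝ) * (Nat.factorial (T.card - 1) : ℝ)
          = Nat.factorial T.card := by
        rw [← Nat.cast_mul, Nat.mul_factorial_pred (by omega)]
      have e3 : ((n : ℝ) - T.card) * (Nat.factorial (n - T.card - 1) : ℝ)
          = Nat.factorial (n - T.card) := by
        have hc : (n : ℝ) - T.card = ((n - T.card : ℕ) : ℝ) :=
          (Nat.cast_sub (le_of_lt hkn)).symm
        rw [hc, ← Nat.cast_mul]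
        congr 1
        have : n - T.card - 1 = (n - T.card) - 1 := rfl
        rw [this, Nat.mul_factorial_pred (by omega)]
      rw [e1]
      rw [add_zero]
      field_simp
      linear_combination ((Nat.factorial (n - T.card) : ℝ) * G T) * e2
        - ((Nat.factorial T.card : ℝ) * G T) * e3
  rw [Finset.sum_congr rfl hcoef, Finset.sum_add_distrib,
    Finset.sum_ite_eq' _ (Finset.univ : Finset (Fin n)),
    Finset.sum_ite_eq' _ (∅ : Finset (Fin n))]
  simp [hzero]
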